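/- Let λ ≥ 0 and let f_Q be a Q-level quantizer satisfying the constrained stationarity condition ∫_{τ_i}^{τ_{i+1}} ((λ + 2)τ − 2 m_i) φ(τ) dτ = 0 for every i = 1, …, Q, together with E[f_Q(g) g] = 1, and set e'_Q = E[(f_Q(g) − g)²]. Then E[f_Q(g)⁴] ≤ 3(1 + λ/2)⁴ and η² := E[(f_Q(g) − g)² g²] ≤ 3(e'_Q + 2)². -/

import Mathlib

noncomputable section
open MeasureTheory ProbabilityTheory Real Set

/-- The standard Gaussian measure on `ℝ`. -/
def stdGauss : Measure ℝ := gaussianReal 0 1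

instance : IsProbabilityMeasure stdGauss := by unfold stdGauss; infer_instance

/-- A `Q`-level quantizer: thresholds `-∞ = τ₁ < τ₂ < … < τ_{Q+1} = +∞` (indexed here by
`Fin (Q+1)`, so `τ 0 = ⊥` and `τ (Fin.last Q) = ⊤`) and values `m₁, …, m_Q`, with the
step function `f` equal to `m i` on the cell `[τ i, τ (i+1))`. -/
structure Quantizer (Q : ℕ) where
  m : Fin Q → ℝ
  τ : Fin (Q + 1) → EReal
  f : ℝ → ℝ
  τ_bot : τ 0 = ⊥
  τ_top : τ (Fin.last Q) = ⊤
  τ_mono : StrictMono τ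
  f_eq : ∀ (i : Fin Q) (t : ℝ), τ i.castSucc ≤ (t : EReal) → (t : EReal) < τ i.succ → f t = m i

/-- The `i`-th quantization cell `[τ_i, τ_{i+1})` (as a subset of `ℝ`). -/
def Quantizer.cell {Q : ℕ} (q : Quantizer Q) (i : Fin Q) : Set ℝ :=
  {t : ℝ | q.τ i.castSucc ≤ (t : EReal) ∧ (t : EReal) < q.τ i.succ}

/-- The mean squared error `E[(f_Q(g) - g)²]` of a quantizer. -/
def MSE {Q : ℕ} (q : Quantizer Q) : ℝ := ∫ t, (q.f t - t) ^ 2 ∂stdGauss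

/-- Constrained (Lagrangian) stationarity:
`∫_{τ_i}^{τ_{i+1}} ((λ+2)τ − 2 m_i) φ(τ) dτ = 0` for every cell. -/
def ConstrainedStationary {Q : ℕ} (q : Quantizer Q) (lam : ℝ) : Prop :=
  ∀ i : Fin Q, ∫ t in q.cell i, ((lam + 2) * t - 2 * q.m i) ∂stdGauss = 0

/-! ### Auxiliary lemmas -/

open scoped ENNReal NNReal

section Aux

/-- Cauchy–Schwarz inequality for integrals. -/
lemma integral_sq_le {α : Type*} {m : MeasurableSpace α} (μ : Measure α) (u v : α → ℝ)
    (hu2 : Integrable (fun x => u x ^ 2) μ) (hv2 : Integrable (fun x => v x ^ 2) μ)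
    (huv : Integrable (fun x => u x * v x) μ) :
    (∫ x, u x * v x ∂μ) ^ 2 ≤ (∫ x, u x ^ 2 ∂μ) * (∫ x, v x ^ 2 ∂μ) := by
  set U := ∫ x, u x ^ 2 ∂μ with hU
  set V := ∫ x, v x ^ 2 ∂μ with hV
  set W := ∫ x, u x * v x ∂μ with hW
  have hUpos : 0 ≤ U := integral_nonneg fun x => sq_nonneg _
  have hVpos : 0 ≤ V := integral_nonneg fun x => sq_nonneg _
  have E : ∀ a b : ℝ, 0 ≤ a ^ 2 * U + 2 * a * b * W + b ^ 2 * V := by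
    intro a b
    have h1 : Integrable (fun x => a ^ 2 * u x ^ 2) μ := hu2.const_mul _
    have h2 : Integrable (fun x => 2 * a * b * (u x * v x)) μ := huv.const_mul _
    have h3 : Integrable (fun x => b ^ 2 * v x ^ 2) μ := hv2.const_mul _
    have h23 : Integrable (fun x => 2 * a * b * (u x * v x) + b ^ 2 * v x ^ 2) μ := h2.add h3
    have key : a ^ 2 * U + 2 * a * b * W + b ^ 2 * V = ∫ x, (a * u x + b * v x) ^ 2 ∂μ := by
      rw [show (fun x => (a * u x + b * v x) ^ 2)
          = fun x => a ^ 2 * u x ^ 2 + (2 * a * b * (u x * v x) + b ^ 2 * v x ^ 2) from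
        funext fun x => by ring]
      rw [integral_add h1 h23, integral_add h2 h3, integral_const_mul,
        integral_const_mul, integral_const_mul]
      ring
    rw [key]
    exact integral_nonneg fun x => sq_nonneg _
  rcases eq_or_lt_of_le hUpos with h | h
  · have k2 := E V (-W)
    have k3 := E 1 1
    have k4 := E 1 (-1)
    rcases eq_or_lt_of_le hVpos with h' | h'
    · nlinarith
    · nlinarith
  · have k1 := E W (-U)
    nlinarith

lemma integrable_poly_gauss (n : ℕ) :
    Integrable (fun x : ℝ => x ^ n * Real.exp (-(1/2) * x ^ 2)) := by
  have h := integrable_rpow_mul_exp_neg_mul_sq (b := 1/2) (by norm_num)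
    (s := (n : ℝ)) (lt_of_lt_of_le (by norm_num) (Nat.cast_nonneg n))
  simpa [Real.rpow_natCast] using h

lemma even_integral {f : ℝ → ℝ} (hf : Integrable f) (he : ∀ x, f (-x) = f x) :
    ∫ x, f x = 2 * ∫ x in Ioi (0:ℝ), f x := by
  have h1 := MeasureTheory.integral_add_compl (measurableSet_Ioi (a := (0:ℝ))) hf
  rw [compl_Ioi] at h1
  have h2 : ∫ x in Iic (0:ℝ), f x = ∫ x in Ioi (0:ℝ), f x := by
    rw [show Iic (0:ℝ) = Iic (-0) by norm_num, ← integral_comp_neg_Ioi]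
    simp_rw [he]
  linarith

lemma gamma32 : Real.Gamma (3/2) = Real.sqrt π / 2 := by
  rw [show (3/2 : ℝ) = 1/2 + 1 by norm_num, Real.Gamma_add_one (by norm_num),
    Real.Gamma_one_half_eq]
  ring

lemma gamma52 : Real.Gamma (5/2) = 3 / 4 * Real.sqrt π := by
  rw [show (5/2 : ℝ) = 3/2 + 1 by norm_num, Real.Gamma_add_one (by norm_num), gamma32]
  ring

lemma half_rpow (r : ℝ) : (1/2 : ℝ) ^ (-r : ℝ) = (2:ℝ) ^ (r : ℝ) := by
  rw [show (1/2:ℝ) = 2⁻¹ by norm_num, ← Real.rpow_neg_one,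
    ← Real.rpow_mul (by norm_num : (0:ℝ) ≤ 2)]
  norm_num

lemma ioi_moment (n : ℕ) (c : ℝ)
    (hc : (1/2 : ℝ) ^ (-((n:ℝ) + 1) / 2) * (1 / 2) * Real.Gamma (((n:ℝ) + 1) / 2) = c) :
    ∫ x in Ioi (0:ℝ), x ^ n * Real.exp (-(1/2) * x ^ 2) = c := by
  have h := integral_rpow_mul_exp_neg_mul_rpow (p := 2) (q := (n:ℝ)) (b := 1/2)
    (by norm_num) (lt_of_lt_of_le (by norm_num) (Nat.cast_nonneg n)) (by norm_num)
  rw [← hc, ← h]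
  refine setIntegral_congr_fun measurableSet_Ioi (fun x hx => ?_)
  rw [show ((2:ℝ)) = ((2:ℕ):ℝ) by norm_num, Real.rpow_natCast, Real.rpow_natCast]

lemma gauss_moment2 : ∫ x : ℝ, x ^ 2 * Real.exp (-(1/2) * x ^ 2) = Real.sqrt (2*π) := by
  rw [even_integral (integrable_poly_gauss 2) (fun x => by ring_nf)]
  rw [ioi_moment 2 (Real.sqrt (2*π) / 2) ?_]
  · ring
  · rw [show (-(((2:ℕ):ℝ) + 1) / 2 : ℝ) = -(3/2) by norm_num, half_rpow,
      show ((((2:ℕ):ℝ) + 1) / 2 : ℝ) = 3/2 by norm_num, gamma32,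
      show (3/2:ℝ) = 1 + 1/2 by norm_num, Real.rpow_add (by norm_num), Real.rpow_one,
      ← Real.sqrt_eq_rpow, Real.sqrt_mul (by norm_num)]
    ring

lemma gauss_moment4 : ∫ x : ℝ, x ^ 4 * Real.exp (-(1/2) * x ^ 2) = 3 * Real.sqrt (2*π) := by
  rw [even_integral (integrable_poly_gauss 4) (fun x => by ring_nf)]
  rw [ioi_moment 4 (3 * Real.sqrt (2*π) / 2) ?_]
  · ring
  · rw [show (-(((4:ℕ):ℝ) + 1) / 2 : ℝ) = -(5/2) by norm_num, half_rpow,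
      show ((((4:ℕ):ℝ) + 1) / 2 : ℝ) = 5/2 by norm_num, gamma52,
      show (5/2:ℝ) = 2 + 1/2 by norm_num, Real.rpow_add (by norm_num),
      ← Real.sqrt_eq_rpow, Real.sqrt_mul (by norm_num),
      show ((2:ℝ) ^ (2:ℝ)) = 4 by
        rw [show ((2:ℝ)) = ((2:ℕ):ℝ) by norm_num, Real.rpow_natCast]; norm_num]
    ring

lemma pdf_eq (x : ℝ) : gaussianPDFReal 0 1 x = (Real.sqrt (2*π))⁻¹ * Real.exp (-(1/2) * x ^ 2) := by
  rw [gaussianPDFReal]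
  push_cast
  ring_nf

lemma integral_stdGauss (g : ℝ → ℝ) :
    ∫ x, g x ∂stdGauss = ∫ x, ((Real.sqrt (2*π))⁻¹ * Real.exp (-(1/2) * x ^ 2)) * g x := by
  rw [stdGauss, gaussianReal_of_var_ne_zero 0 one_ne_zero]
  have hmeas : Measurable fun x => (gaussianPDFReal 0 1 x).toNNReal :=
    (measurable_gaussianPDFReal 0 1).real_toNNReal
  rw [show gaussianPDF 0 1 = fun x => (((gaussianPDFReal 0 1 x).toNNReal : ℝ≥0) : ℝ≥0∞) from
    funext fun x => rfl]
  rw [integral_withDensity_eq_integral_smul hmeas g]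
  refine integral_congr_ae (Filter.Eventually.of_forall fun x => ?_)
  simp only [NNReal.smul_def, smul_eq_mul, pdf_eq]
  rw [Real.coe_toNNReal _ (by positivity)]

lemma integrable_stdGauss_iff (g : ℝ → ℝ) :
    Integrable g stdGauss ↔
      Integrable (fun x => ((Real.sqrt (2*π))⁻¹ * Real.exp (-(1/2) * x ^ 2)) * g x) := by
  rw [stdGauss, gaussianReal_of_var_ne_zero 0 one_ne_zero]
  have hmeas : Measurable fun x => (gaussianPDFReal 0 1 x).toNNReal :=
    (measurable_gaussianPDFReal 0 1).real_toNNReal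
  rw [show gaussianPDF 0 1 = fun x => (((gaussianPDFReal 0 1 x).toNNReal : ℝ≥0) : ℝ≥0∞) from
    funext fun x => rfl]
  rw [integrable_withDensity_iff_integrable_smul hmeas]
  apply integrable_congr
  refine Filter.Eventually.of_forall fun x => ?_
  simp only [NNReal.smul_def, smul_eq_mul, pdf_eq]
  rw [Real.coe_toNNReal _ (by positivity)]

lemma integrable_pow_stdGauss (n : ℕ) : Integrable (fun x => x ^ n) stdGauss := by
  rw [integrable_stdGauss_iff]
  have h := (integrable_poly_gauss n).const_mul (Real.sqrt (2*π))⁻¹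
  refine h.congr (Filter.Eventually.of_forall fun x => by ring)

lemma sqrt2pi_pos : 0 < Real.sqrt (2*π) := Real.sqrt_pos.mpr (by positivity)

lemma stdGauss_moment2 : ∫ x, x ^ 2 ∂stdGauss = 1 := by
  rw [integral_stdGauss]
  rw [show (fun x : ℝ => ((Real.sqrt (2*π))⁻¹ * Real.exp (-(1/2) * x ^ 2)) * x ^ 2)
      = fun x : ℝ => (Real.sqrt (2*π))⁻¹ * (x ^ 2 * Real.exp (-(1/2) * x ^ 2)) from
    funext fun x => by ring]
  rw [integral_const_mul, gauss_moment2, inv_mul_cancel₀ (ne_of_gt sqrt2pi_pos)]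

lemma stdGauss_moment4 : ∫ x, x ^ 4 ∂stdGauss = 3 := by
  rw [integral_stdGauss]
  rw [show (fun x : ℝ => ((Real.sqrt (2*π))⁻¹ * Real.exp (-(1/2) * x ^ 2)) * x ^ 4)
      = fun x : ℝ => (Real.sqrt (2*π))⁻¹ * (x ^ 4 * Real.exp (-(1/2) * x ^ 2)) from
    funext fun x => by ring]
  rw [integral_const_mul, gauss_moment4]
  field_simp

lemma integrable_master {g : ℝ → ℝ} (hg : AEStronglyMeasurable g stdGauss) (C : ℝ)
    (hb : ∀ x, |g x| ≤ C * (1 + x ^ 4)) : Integrable g stdGauss := by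
  have hi : Integrable (fun x : ℝ => C * (1 + x ^ 4)) stdGauss := by
    refine Integrable.const_mul ?_ C
    exact ((integrable_const (1:ℝ)).add (integrable_pow_stdGauss 4)).congr
      (Filter.Eventually.of_forall fun x => rfl)
  exact hi.mono' hg (Filter.Eventually.of_forall fun x => by rw [Real.norm_eq_abs]; exact hb x)

lemma abs_pow_le_aux (t : ℝ) (b : ℕ) (hb : b ≤ 4) : |t| ^ b ≤ 1 + t ^ 4 := by
  have h4 : |t| ^ 4 = t ^ 4 := by rw [← abs_pow, abs_of_nonneg (by positivity)]
  rcases le_total |t| 1 with h | h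
  · have := pow_le_one₀ (abs_nonneg t) h (n := b)
    nlinarith [pow_nonneg (abs_nonneg t) 4, h4]
  · have := pow_le_pow_right₀ h hb
    nlinarith

end Aux

namespace Quantizer
variable {Q : ℕ} (q : Quantizer Q)

lemma cell_measurable (i : Fin Q) : MeasurableSet (q.cell i) := by
  have : q.cell i = (fun t : ℝ => (t : EReal)) ⁻¹' (Ico (q.τ i.castSucc) (q.τ i.succ)) := rfl
  rw [this]
  exact measurable_coe_real_ereal measurableSet_Ico

lemma exists_cell (t : ℝ) : ∃ i : Fin Q, t ∈ q.cell i := by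
  classical
  set s : Finset (Fin (Q + 1)) := Finset.univ.filter (fun j => q.τ j ≤ (t : EReal)) with hs
  have h0 : (0 : Fin (Q+1)) ∈ s := by
    simp [hs, q.τ_bot]
  have hne : s.Nonempty := ⟨0, h0⟩
  set j := s.max' hne with hj
  have hjs : j ∈ s := s.max'_mem hne
  have hjle : q.τ j ≤ (t : EReal) := by simpa [hs] using hjs
  have hjne : j ≠ Fin.last Q := by
    intro h
    rw [h, q.τ_top] at hjle
    exact (EReal.coe_lt_top t).not_ge (by simpa using hjle)
  obtain ⟨i, hi⟩ := Fin.exists_castSucc_eq.mpr hjne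
  refine ⟨i, ?_, ?_⟩
  · rw [hi]; exact hjle
  · by_contra h
    push_neg at h
    have : i.succ ∈ s := by simpa [hs] using h
    have := s.le_max' _ this
    rw [← hj, ← hi] at this
    exact absurd (lt_of_lt_of_le (Fin.castSucc_lt_succ (i := i)) this) (lt_irrefl _)

lemma cell_disjoint_lt {i j : Fin Q} (h : i < j) : Disjoint (q.cell i) (q.cell j) := by
  refine Set.disjoint_left.mpr fun t hti htj => ?_
  have h1 : (t : EReal) < q.τ i.succ := hti.2
  have h2 : q.τ j.castSucc ≤ (t : EReal) := htj.1
  have h3 : q.τ i.succ ≤ q.τ j.castSucc :=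
    q.τ_mono.monotone (Fin.succ_le_castSucc_iff.mpr h)
  exact absurd (lt_of_lt_of_le h1 (le_trans h3 h2)) (lt_irrefl _)

lemma cell_disjoint : Pairwise (Function.onFun Disjoint q.cell) := by
  intro i j hij
  rcases hij.lt_or_gt with h | h
  · exact q.cell_disjoint_lt h
  · exact (q.cell_disjoint_lt h).symm

lemma mem_cell_f_eq {i : Fin Q} {t : ℝ} (ht : t ∈ q.cell i) : q.f t = q.m i :=
  q.f_eq i t ht.1 ht.2

lemma f_measurable : Measurable q.f := by
  classical
  have hrep : q.f = fun t => ∑ i : Fin Q, (q.cell i).indicator (fun _ => q.m i) t := by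
    funext t
    obtain ⟨i, hi⟩ := q.exists_cell t
    rw [Finset.sum_eq_single i]
    · rw [Set.indicator_of_mem hi, q.mem_cell_f_eq hi]
    · intro j _ hj
      refine Set.indicator_of_notMem (fun htj => ?_) _
      exact Set.disjoint_left.mp (q.cell_disjoint hj) htj hi
    · intro h; exact absurd (Finset.mem_univ i) h
  rw [hrep]
  exact Finset.measurable_sum _ fun i _ => measurable_const.indicator (q.cell_measurable i)

lemma f_bound (t : ℝ) : |q.f t| ≤ ∑ i : Fin Q, |q.m i| := by
  obtain ⟨i, hi⟩ := q.exists_cell t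
  rw [q.mem_cell_f_eq hi]
  exact Finset.single_le_sum (fun j _ => abs_nonneg (q.m j)) (Finset.mem_univ i)

lemma cell_cover : ⋃ i : Fin Q, q.cell i = univ := by
  ext t
  simp only [mem_iUnion, mem_univ, iff_true]
  exact q.exists_cell t

lemma integrable_fab (a b : ℕ) (ha : a ≤ 4) (hb : b ≤ 4) :
    Integrable (fun t => q.f t ^ a * t ^ b) stdGauss := by
  set M := (∑ i : Fin Q, |q.m i|) + 1 with hM
  have hM1 : 1 ≤ M := le_add_of_nonneg_left (Finset.sum_nonneg fun i _ => abs_nonneg _)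
  have hfb : ∀ t, |q.f t| ≤ M := fun t => (q.f_bound t).trans (by linarith)
  have hmeas : Measurable fun t => q.f t ^ a * t ^ b :=
    (q.f_measurable.pow_const a).mul ((measurable_id.pow_const b))
  refine integrable_master hmeas.aestronglyMeasurable (M ^ 4) fun x => ?_
  rw [abs_mul, abs_pow, abs_pow]
  have h1 : |q.f x| ^ a ≤ M ^ 4 :=
    (pow_le_pow_left₀ (abs_nonneg _) (hfb x) a).trans (pow_le_pow_right₀ hM1 ha)
  have h2 : |x| ^ b ≤ 1 + x ^ 4 := abs_pow_le_aux x b hb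
  exact mul_le_mul h1 h2 (by positivity) (by positivity)

lemma integral_cells (g : ℝ → ℝ) (hg : Integrable g stdGauss) :
    ∫ t, g t ∂stdGauss = ∑ i : Fin Q, ∫ t in q.cell i, g t ∂stdGauss := by
  rw [← setIntegral_univ, ← q.cell_cover,
    integral_iUnion_fintype q.cell_measurable q.cell_disjoint (fun i => hg.integrableOn)]

end Quantizer

/-- Under constrained stationarity with multiplier `λ ≥ 0` and
`E[f_Q(g) g] = 1`, with `e'_Q = E[(f_Q(g)-g)²]`:
`E[f_Q(g)⁴] ≤ 3(1+λ/2)⁴` and `η² = E[(f_Q(g) - g)² g²] ≤ 3(e'_Q + 2)²`. -/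
theorem constrained_eta_bound {Q : ℕ} (q : Quantizer Q) (lam : ℝ) (hlam : 0 ≤ lam)
    (hstat : ConstrainedStationary q lam)
    (hμ : ∫ t, q.f t * t ∂stdGauss = 1)
    (eQ' : ℝ) (heQ' : eQ' = ∫ t, (q.f t - t) ^ 2 ∂stdGauss) :
    (∫ t, q.f t ^ 4 ∂stdGauss ≤ 3 * (1 + lam / 2) ^ 4) ∧
    (∫ t, (q.f t - t) ^ 2 * t ^ 2 ∂stdGauss ≤ 3 * (eQ' + 2) ^ 2) := by
  classical
  set a : ℝ := 1 + lam / 2 with ha_def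
  have ha1 : (1:ℝ) ≤ a := by simp [ha_def]; linarith
  have ha0 : (0:ℝ) < a := lt_of_lt_of_le one_pos ha1
  -- integrability facts
  have hid : Integrable (fun t : ℝ => t) stdGauss := by
    simpa using integrable_pow_stdGauss 1
  have hsq : Integrable (fun t : ℝ => t ^ 2) stdGauss := integrable_pow_stdGauss 2
  have hquart : Integrable (fun t : ℝ => t ^ 4) stdGauss := integrable_pow_stdGauss 4
  have hf2 : Integrable (fun t => q.f t ^ 2) stdGauss := by
    have := q.integrable_fab 2 0 (by norm_num) (by norm_num)
    exact this.congr (Filter.Eventually.of_forall fun t => by ring)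
  have hf4 : Integrable (fun t => q.f t ^ 4) stdGauss := by
    have := q.integrable_fab 4 0 (by norm_num) (by norm_num)
    exact this.congr (Filter.Eventually.of_forall fun t => by ring)
  have hft : Integrable (fun t => q.f t * t) stdGauss := by
    have := q.integrable_fab 1 1 (by norm_num) (by norm_num)
    exact this.congr (Filter.Eventually.of_forall fun t => by ring)
  have hft3 : Integrable (fun t => q.f t * t ^ 3) stdGauss := by
    have := q.integrable_fab 1 3 (by norm_num) (by norm_num)
    exact this.congr (Filter.Eventually.of_forall fun t => by ring)
  have hf2t2 : Integrable (fun t => q.f t ^ 2 * t ^ 2) stdGauss :=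
    q.integrable_fab 2 2 (by norm_num) (by norm_num)
  -- cell quantities
  set P : Fin Q → ℝ := fun i => (stdGauss (q.cell i)).toReal with hP_def
  set u : Fin Q → ℝ := fun i => ∫ t in q.cell i, t ∂stdGauss with hu_def
  set w : Fin Q → ℝ := fun i => ∫ t in q.cell i, t ^ 4 ∂stdGauss with hw_def
  -- stationarity rewritten
  have hstat' : ∀ i, q.m i * P i = a * u i := by
    intro i
    have h := hstat i
    have h1 : Integrable (fun t : ℝ => (lam + 2) * t) (stdGauss.restrict (q.cell i)) :=
      (hid.const_mul (lam + 2)).restrict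
    have h2 : Integrable (fun _ : ℝ => 2 * q.m i) (stdGauss.restrict (q.cell i)) :=
      integrable_const _
    rw [integral_sub h1 h2, integral_const_mul, setIntegral_const, smul_eq_mul] at h
    have : (lam + 2) * u i - P i * (2 * q.m i) = 0 := h
    have h2a : a = (lam + 2) / 2 := by rw [ha_def]; ring
    rw [h2a]
    linarith
  -- per-cell set-integral identities
  have cellft : ∀ i, ∫ t in q.cell i, q.f t * t ∂stdGauss = q.m i * u i := by
    intro i
    rw [setIntegral_congr_fun (q.cell_measurable i)
      (g := fun t => q.m i * t) (fun t ht => by rw [q.mem_cell_f_eq ht]), integral_const_mul]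
  have cellf2 : ∀ i, ∫ t in q.cell i, q.f t ^ 2 ∂stdGauss = q.m i ^ 2 * P i := by
    intro i
    rw [setIntegral_congr_fun (q.cell_measurable i)
      (g := fun _ => q.m i ^ 2) (fun t ht => by rw [q.mem_cell_f_eq ht]), setIntegral_const,
      smul_eq_mul, mul_comm]
    rfl
  have cellf4 : ∀ i, ∫ t in q.cell i, q.f t ^ 4 ∂stdGauss = q.m i ^ 4 * P i := by
    intro i
    rw [setIntegral_congr_fun (q.cell_measurable i)
      (g := fun _ => q.m i ^ 4) (fun t ht => by rw [q.mem_cell_f_eq ht]), setIntegral_const,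
      smul_eq_mul, mul_comm]
    rfl
  -- E[f g] = ∑ mᵢ uᵢ = 1
  have hsum_mu : ∑ i : Fin Q, q.m i * u i = 1 := by
    rw [← hμ, q.integral_cells _ hft]
    exact Finset.sum_congr rfl fun i _ => (cellft i).symm
  -- E[f²] = a
  have hEf2 : ∫ t, q.f t ^ 2 ∂stdGauss = a := by
    rw [q.integral_cells _ hf2]
    have : ∀ i : Fin Q, ∫ t in q.cell i, q.f t ^ 2 ∂stdGauss = a * (q.m i * u i) := by
      intro i
      rw [cellf2 i, pow_two, mul_assoc, hstat' i]
      ring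
    rw [Finset.sum_congr rfl fun i _ => this i, ← Finset.mul_sum, hsum_mu, mul_one]
  -- E[f⁴] ≤ a⁴ * ∑ wᵢ
  have hEf4 : ∫ t, q.f t ^ 4 ∂stdGauss = ∑ i : Fin Q, q.m i ^ 4 * P i := by
    rw [q.integral_cells _ hf4]
    exact Finset.sum_congr rfl fun i _ => cellf4 i
  have hwsum : ∑ i : Fin Q, w i = 3 := by
    rw [← stdGauss_moment4, q.integral_cells _ hquart]
  have hcell4 : ∀ i, q.m i ^ 4 * P i ≤ a ^ 4 * w i := by
    intro i
    rcases eq_or_lt_of_le (ENNReal.toReal_nonneg : 0 ≤ P i) with hP | hP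
    · -- null cell
      have hz : stdGauss (q.cell i) = 0 := by
        have := (ENNReal.toReal_eq_zero_iff _).mp hP.symm
        exact this.resolve_right (measure_ne_top _ _)
      have hres : stdGauss.restrict (q.cell i) = 0 := Measure.restrict_eq_zero.mpr hz
      have hw0 : w i = 0 := by rw [hw_def]; simp [hres]
      have hPi : P i = 0 := hP.symm
      rw [hPi, hw0]
      simp
    · -- positive-measure cell: Cauchy–Schwarz twice
      set ν := stdGauss.restrict (q.cell i) with hν
      have hνuniv : (ν univ).toReal = P i := by
        rw [hν, Measure.restrict_apply_univ]
      have hI1 : Integrable (fun _ : ℝ => (1:ℝ)) ν := integrable_const _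
      have hIid : Integrable (fun t : ℝ => t) ν := hid.restrict
      have hIsq : Integrable (fun t : ℝ => t ^ 2) ν := hsq.restrict
      have hIquart : Integrable (fun t : ℝ => t ^ 4) ν := hquart.restrict
      have CS1 : (∫ t, t ∂ν) ^ 2 ≤ P i * ∫ t, t ^ 2 ∂ν := by
        have h := integral_sq_le ν (fun _ => (1:ℝ)) (fun t => t)
          (by simpa using hI1) hIsq (by simpa using hIid)
        simpa [show ν.real univ = P i from hνuniv] using h
      have CS2 : (∫ t, t ^ 2 ∂ν) ^ 2 ≤ P i * ∫ t, t ^ 4 ∂ν := by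
        have h := integral_sq_le ν (fun _ => (1:ℝ)) (fun t => t ^ 2)
          (by simpa using hI1) (by
            refine hIquart.congr (Filter.Eventually.of_forall fun t => by ring))
          (by simpa using hIsq)
        have e1 : (∫ x, (x ^ 2) ^ 2 ∂ν) = ∫ x, x ^ 4 ∂ν :=
          integral_congr_ae (Filter.Eventually.of_forall fun x => by ring)
        simpa [show ν.real univ = P i from hνuniv, e1] using h
      have hvi : ∫ t, t ∂ν = u i := rfl
      have hv2i : (∫ t, t ^ 2 ∂ν) = ∫ t in q.cell i, t ^ 2 ∂stdGauss := rfl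
      have hwi : (∫ t, t ^ 4 ∂ν) = w i := rfl
      set v2 : ℝ := ∫ t in q.cell i, t ^ 2 ∂stdGauss with hv2_def
      rw [hvi] at CS1
      rw [hwi] at CS2
      have hv2nn : 0 ≤ v2 := integral_nonneg fun t => sq_nonneg _
      have hwnn : 0 ≤ w i := integral_nonneg fun t => by positivity
      have hu4 : u i ^ 4 ≤ P i ^ 3 * w i := by
        have hsq1 : (u i ^ 2) ^ 2 ≤ (P i * v2) ^ 2 := by
          have := pow_le_pow_left₀ (sq_nonneg (u i)) CS1 2
          simpa using this
        have hsq2 : (P i * v2) ^ 2 = P i ^ 2 * v2 ^ 2 := by ring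
        nlinarith [mul_le_mul_of_nonneg_left CS2 (sq_nonneg (P i))]
      have hmP : (q.m i * P i) ^ 4 = a ^ 4 * u i ^ 4 := by rw [hstat' i]; ring
      have key : (q.m i ^ 4 * P i) * P i ^ 3 ≤ (a ^ 4 * w i) * P i ^ 3 := by
        have h1 : (q.m i ^ 4 * P i) * P i ^ 3 = (q.m i * P i) ^ 4 := by ring
        have h2 : a ^ 4 * u i ^ 4 ≤ a ^ 4 * (P i ^ 3 * w i) :=
          mul_le_mul_of_nonneg_left hu4 (by positivity)
        rw [h1, hmP]
        linarith [h2]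
      exact le_of_mul_le_mul_right key (by positivity)
  have goal1 : ∫ t, q.f t ^ 4 ∂stdGauss ≤ 3 * a ^ 4 := by
    rw [hEf4]
    calc ∑ i : Fin Q, q.m i ^ 4 * P i ≤ ∑ i : Fin Q, a ^ 4 * w i :=
          Finset.sum_le_sum fun i _ => hcell4 i
      _ = a ^ 4 * ∑ i : Fin Q, w i := by rw [Finset.mul_sum]
      _ = 3 * a ^ 4 := by rw [hwsum]; ring
  -- e'_Q = a - 1
  have heQval : eQ' = a - 1 := by
    rw [heQ']
    have hexp : (fun t => (q.f t - t) ^ 2)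
        = fun t => (q.f t ^ 2 - 2 * (q.f t * t)) + t ^ 2 := funext fun t => by ring
    have hfc2 : Integrable (fun t => 2 * (q.f t * t)) stdGauss := hft.const_mul 2
    have hA1 : Integrable (fun t => q.f t ^ 2 - 2 * (q.f t * t)) stdGauss := hf2.sub hfc2
    rw [hexp, integral_add hA1 hsq, integral_sub hf2 hfc2,
      integral_const_mul, hEf2, hμ, stdGauss_moment2]
    ring
  -- second bound
  set S2 : ℝ := ∫ t, q.f t ^ 2 * t ^ 2 ∂stdGauss with hS2_def
  set S3 : ℝ := ∫ t, q.f t * t ^ 3 ∂stdGauss with hS3_def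
  set A : ℝ := ∫ t, q.f t ^ 4 ∂stdGauss with hA_def
  have hAnn : 0 ≤ A := integral_nonneg fun t => by positivity
  have hS2nn : 0 ≤ S2 := integral_nonneg fun t => by positivity
  have hS2sq : S2 ^ 2 ≤ A * 3 := by
    have h := integral_sq_le stdGauss (fun t => q.f t ^ 2) (fun t => t ^ 2)
      (by refine hf4.congr (Filter.Eventually.of_forall fun t => by ring))
      (by refine hquart.congr (Filter.Eventually.of_forall fun t => by ring))
      hf2t2
    rw [show (fun t : ℝ => (t ^ 2) ^ 2) = fun t : ℝ => t ^ 4 from funext fun t => by ring,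
      show (fun t => (q.f t ^ 2) ^ 2) = fun t => q.f t ^ 4 from funext fun t => by ring,
      stdGauss_moment4] at h
    exact h
  have hS3sq : S3 ^ 2 ≤ S2 * 3 := by
    have h := integral_sq_le stdGauss (fun t => q.f t * t) (fun t => t ^ 2)
      (by refine hf2t2.congr (Filter.Eventually.of_forall fun t => by ring))
      (by refine hquart.congr (Filter.Eventually.of_forall fun t => by ring))
      (by refine hft3.congr (Filter.Eventually.of_forall fun t => by ring))
    rw [show (fun t : ℝ => (t ^ 2) ^ 2) = fun t : ℝ => t ^ 4 from funext fun t => by ring,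
      show (fun t => (q.f t * t) ^ 2) = fun t => q.f t ^ 2 * t ^ 2 from funext fun t => by ring,
      show (fun t => q.f t * t * t ^ 2) = fun t => q.f t * t ^ 3 from funext fun t => by ring,
      stdGauss_moment4] at h
    exact h
  have hS2le : S2 ≤ 3 * a ^ 2 := by
    have h9 : S2 ^ 2 ≤ (3 * a ^ 2) ^ 2 := by nlinarith [goal1]
    calc S2 = Real.sqrt (S2 ^ 2) := (Real.sqrt_sq hS2nn).symm
      _ ≤ Real.sqrt ((3 * a ^ 2) ^ 2) := Real.sqrt_le_sqrt h9
      _ = 3 * a ^ 2 := Real.sqrt_sq (by positivity)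
  have hS3le : -S3 ≤ 3 * a := by
    have h9 : S3 ^ 2 ≤ (3 * a) ^ 2 := by nlinarith [hS2le]
    have habs : |S3| ≤ 3 * a := by
      calc |S3| = Real.sqrt (S3 ^ 2) := (Real.sqrt_sq_eq_abs S3).symm
        _ ≤ Real.sqrt ((3 * a) ^ 2) := Real.sqrt_le_sqrt h9
        _ = 3 * a := Real.sqrt_sq (by positivity)
    linarith [neg_abs_le S3]
  have hetaexp : ∫ t, (q.f t - t) ^ 2 * t ^ 2 ∂stdGauss = S2 - 2 * S3 + 3 := by
    have hexp : (fun t => (q.f t - t) ^ 2 * t ^ 2)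
        = fun t => (q.f t ^ 2 * t ^ 2 - 2 * (q.f t * t ^ 3)) + t ^ 4 := funext fun t => by ring
    have hfc2 : Integrable (fun t => 2 * (q.f t * t ^ 3)) stdGauss := hft3.const_mul 2
    have hA1 : Integrable (fun t => q.f t ^ 2 * t ^ 2 - 2 * (q.f t * t ^ 3)) stdGauss :=
      hf2t2.sub hfc2
    rw [hexp, integral_add hA1 hquart,
      integral_sub hf2t2 hfc2, integral_const_mul, stdGauss_moment4]
  constructor
  · exact goal1
  · rw [hetaexp, heQval,
      show (3 * ((a - 1) + 2) ^ 2 : ℝ) = 3 * a ^ 2 + 6 * a + 3 from by ring]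
    linarith [hS2le, hS3le]
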